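/- Let n ≥ 1, s ∈ (0,1), and let G be a Young function satisfying condition (cond) with exponents 1 < p⁻ ≤ p⁺ < ∞ and s·p⁺ < n. Let G^{-1} be the inverse of G on [0,∞). Then ∫₀¹ G^{-1}(τ)·τ^{−1−s/n} dτ < ∞ and ∫₁^∞ G^{-1}(τ)·τ^{−1−s/n} dτ = ∞. -/

import Mathlib

open MeasureTheory Real Set Filter
open scoped ENNReal

noncomputable section

/-- A Young function `G` together with its right-continuous density `g`:
`G t = ∫₀ᵗ g(τ) dτ` for `t ≥ 0`, where `g` is right-continuous, nondecreasing on `[0,∞)`,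
`g 0 = 0`, `g t > 0` for `t > 0` and `g t → ∞` as `t → ∞`.  `G` is extended evenly
(`G (-t) = G t`) and `g` oddly (`g (-t) = -g t`). -/
structure YoungPair where
  g : ℝ → ℝ
  G : ℝ → ℝ
  g_odd : ∀ t, g (-t) = -g t
  g_zero : g 0 = 0
  g_pos : ∀ t : ℝ, 0 < t → 0 < g t
  g_mono : MonotoneOn g (Set.Ici 0)
  g_rightCont : ∀ t ∈ Set.Ici (0 : ℝ), ContinuousWithinAt g (Set.Ici t) t
  g_atTop : Filter.Tendsto g Filter.atTop Filter.atTop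
  G_even : ∀ t, G (-t) = G t
  G_eq : ∀ t : ℝ, 0 ≤ t → G t = ∫ τ in (0 : ℝ)..t, g τ

/-- Condition (cond): `p⁻ ≤ t·g(t)/G(t) ≤ p⁺` for all `t > 0`. -/
def YoungPair.Cond (Y : YoungPair) (pm pp : ℝ) : Prop :=
  ∀ t : ℝ, 0 < t → pm * Y.G t ≤ t * Y.g t ∧ t * Y.g t ≤ pp * Y.G t

/-- Euclidean space `ℝⁿ`. -/
abbrev Euc (n : ℕ) := EuclideanSpace ℝ (Fin n)

/-- The `s`-Hölder quotient `D_s u(x,y) = (u x - u y)/|x-y|^s`. -/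
def Ds (n : ℕ) (s : ℝ) (u : Euc n → ℝ) (x y : Euc n) : ℝ :=
  (u x - u y) / ‖x - y‖ ^ s

/-- The modular `Φ_G(u) = ∫_Ω G(|u|) dx` (as an extended real). -/
def modG (n : ℕ) (G : ℝ → ℝ) (Ω : Set (Euc n)) (u : Euc n → ℝ) : ℝ≥0∞ :=
  ∫⁻ x in Ω, ENNReal.ofReal (G |u x|)

/-- The Gagliardo modular `Φ_{s,G}(u) = ∬ G(|D_s u(x,y)|) dx dy/|x-y|ⁿ`
(as an extended real). -/
def modsG (n : ℕ) (s : ℝ) (G : ℝ → ℝ) (u : Euc n → ℝ) : ℝ≥0∞ :=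
  ∫⁻ p : Euc n × Euc n, ENNReal.ofReal (G |Ds n s u p.1 p.2| / ‖p.1 - p.2‖ ^ (n : ℝ))

/-- Membership in `W^{s,G}_0(Ω)`: measurable, finite modulars, vanishing a.e. outside `Ω`. -/
def MemW0 (n : ℕ) (s : ℝ) (G : ℝ → ℝ) (Ω : Set (Euc n)) (u : Euc n → ℝ) : Prop :=
  Measurable u ∧ modG n G Ω u + modsG n s G u < ⊤ ∧
    ∀ᵐ x : Euc n ∂volume, x ∉ Ω → u x = 0

/-- `u` is a weak solution of `(-Δ_g)^s u = rhs(u)` in `Ω`, `u = 0` in `ℝⁿ ∖ Ω`: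
for every `v ∈ W^{s,G}_0(Ω)` the defining double integral converges absolutely and equals
`∫_Ω rhs(u) v dx`. -/
def IsWeakSol (n : ℕ) (s : ℝ) (Y : YoungPair) (Ω : Set (Euc n)) (rhs : ℝ → ℝ)
    (u : Euc n → ℝ) : Prop :=
  MemW0 n s Y.G Ω u ∧
  ∀ v : Euc n → ℝ, MemW0 n s Y.G Ω v →
    MeasureTheory.Integrable (fun p : Euc n × Euc n =>
      Y.g (Ds n s u p.1 p.2) * (v p.1 - v p.2) / ‖p.1 - p.2‖ ^ ((n : ℝ) + s)) ∧
    (∫ p : Euc n × Euc n,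
        Y.g (Ds n s u p.1 p.2) * (v p.1 - v p.2) / ‖p.1 - p.2‖ ^ ((n : ℝ) + s)) =
      ∫ x in Ω, rhs (u x) * v x

/-- The Luxemburg norm `‖u‖_{L^Ψ(Ω)}` (with value `∞` when no admissible `λ` exists). -/
def luxNorm (n : ℕ) (Ψ : ℝ → ℝ) (Ω : Set (Euc n)) (u : Euc n → ℝ) : ℝ≥0∞ :=
  sInf {lam : ℝ≥0∞ | 0 < lam ∧ lam ≠ ⊤ ∧
    (∫⁻ x in Ω, ENNReal.ofReal (Ψ (|u x| / lam.toReal))) ≤ 1}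

/-- The Gagliardo seminorm `[u]_{s,G}` (with value `∞` when no admissible `λ` exists). -/
def gagSemi (n : ℕ) (s : ℝ) (G : ℝ → ℝ) (u : Euc n → ℝ) : ℝ≥0∞ :=
  sInf {lam : ℝ≥0∞ | 0 < lam ∧ lam ≠ ⊤ ∧
    modsG n s G (fun x => u x / lam.toReal) ≤ 1}


set_option maxHeartbeats 1000000

namespace YoungPair
variable (Y : YoungPair)

lemma g_nonneg {t : ℝ} (ht : 0 ≤ t) : 0 ≤ Y.g t := by
  have := Y.g_mono (self_mem_Ici) (ht : t ∈ Set.Ici 0) ht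
  simpa [Y.g_zero] using this

lemma g_intervalIntegrable {a b : ℝ} (ha : 0 ≤ a) (hab : a ≤ b) :
    IntervalIntegrable Y.g volume a b := by
  apply MonotoneOn.intervalIntegrable
  apply Y.g_mono.mono
  rw [Set.uIcc_of_le hab]
  exact fun x hx => le_trans ha hx.1

lemma G_diff {a b : ℝ} (ha : 0 ≤ a) (hab : a ≤ b) :
    Y.G b - Y.G a = ∫ τ in a..b, Y.g τ := by
  have h1 := Y.g_intervalIntegrable le_rfl ha
  have h2 := Y.g_intervalIntegrable ha hab
  have h3 := intervalIntegral.integral_add_adjacent_intervals h1 h2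
  rw [Y.G_eq b (ha.trans hab), Y.G_eq a ha]
  linarith

lemma int_lb {a b : ℝ} (ha : 0 ≤ a) (hab : a ≤ b) :
    Y.g a * (b - a) ≤ ∫ τ in a..b, Y.g τ := by
  have := intervalIntegral.integral_mono_on hab (intervalIntegrable_const (c := Y.g a))
    (Y.g_intervalIntegrable ha hab)
    (fun x hx => Y.g_mono (by exact ha) (le_trans ha hx.1) hx.1)
  simpa [mul_comm] using this

lemma int_ub {a b : ℝ} (ha : 0 ≤ a) (hab : a ≤ b) :
    (∫ τ in a..b, Y.g τ) ≤ Y.g b * (b - a) := by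
  have := intervalIntegral.integral_mono_on hab (Y.g_intervalIntegrable ha hab)
    (intervalIntegrable_const (c := Y.g b))
    (fun x hx => Y.g_mono (le_trans ha hx.1) (le_trans ha hab) hx.2)
  simpa [mul_comm] using this

lemma G_mono : MonotoneOn Y.G (Set.Ici 0) := by
  intro a ha b hb hab
  have h := Y.G_diff ha hab
  have h2 : 0 ≤ ∫ τ in a..b, Y.g τ :=
    intervalIntegral.integral_nonneg hab (fun x hx => Y.g_nonneg (le_trans ha hx.1))
  linarith

lemma G_strictMono : StrictMonoOn Y.G (Set.Ici 0) := by
  intro a ha b _ hab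
  have ha' : (0:ℝ) ≤ a := ha
  have hm : (0:ℝ) < (a+b)/2 := by linarith
  have hm2 : a ≤ (a+b)/2 := by linarith
  have hm3 : (a+b)/2 ≤ b := by linarith
  have h1 : Y.G a ≤ Y.G ((a+b)/2) := Y.G_mono ha (le_trans ha hm2) hm2
  have h2 := Y.G_diff (le_trans ha hm2) hm3
  have h3 := Y.int_lb (a := (a+b)/2) (b := b) (le_trans ha hm2) hm3
  have h4 : 0 < Y.g ((a+b)/2) * (b - (a+b)/2) := by
    apply mul_pos (Y.g_pos _ hm); linarith
  linarith

lemma G_zero : Y.G 0 = 0 := by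
  simpa using Y.G_eq 0 le_rfl

lemma G_pos {t : ℝ} (ht : 0 < t) : 0 < Y.G t := by
  have := Y.G_strictMono (le_refl (0:ℝ)) (le_of_lt ht) ht
  simpa [Y.G_zero] using this

end YoungPair

/-- convergence of `∫₀¹ G⁻¹(τ) τ^{-1-s/n} dτ` and divergence of
`∫₁^∞ G⁻¹(τ) τ^{-1-s/n} dτ`. -/
theorem statement9 (n : ℕ) (hn : 1 ≤ n) (s : ℝ) (hs : s ∈ Set.Ioo (0 : ℝ) 1)
    (pm pp : ℝ) (hpm : 1 < pm) (hpmpp : pm ≤ pp) (hspp : s * pp < n)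
    (Y : YoungPair) (hY : Y.Cond pm pp)
    (Ginv : ℝ → ℝ)
    (hGinv : ∀ t : ℝ, 0 ≤ t → 0 ≤ Ginv t ∧ Y.G (Ginv t) = t)
    (hGinv' : ∀ t : ℝ, 0 ≤ t → Ginv (Y.G t) = t) :
    (∫⁻ τ in Set.Ioo (0 : ℝ) 1,
        ENNReal.ofReal (Ginv τ * τ ^ (-1 - s / n)) < ⊤) ∧
    (∫⁻ τ in Set.Ioi (1 : ℝ),
        ENNReal.ofReal (Ginv τ * τ ^ (-1 - s / n)) = ⊤) := by
  have hn' : (0:ℝ) < n := by exact_mod_cast hn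
  have hs0 : 0 < s := hs.1
  have hpp1 : (1:ℝ) < pp := lt_of_lt_of_le hpm hpmpp
  have hpp0 : (0:ℝ) < pp := by linarith
  obtain ⟨q, hqdef⟩ : ∃ q : ℝ, q = (pp + n / s) / 2 := ⟨_, rfl⟩
  have hppns : pp < n / s := (lt_div_iff₀ hs0).2 (by nlinarith)
  have hq : pp < q := by rw [hqdef]; linarith
  have hq0 : (0:ℝ) < q := lt_trans hpp0 hq
  have hsq : s * q < n := by
    have hns : s * (n / s) = n := by field_simp
    rw [hqdef]; nlinarith
  obtain ⟨x, hxdef⟩ : ∃ x : ℝ, x = (q - pp) / (pp * q) := ⟨_, rfl⟩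
  have hx : 0 < x := by rw [hxdef]; exact div_pos (by linarith) (mul_pos hpp0 hq0)
  have hppx : 1 - pp * x = pp / q := by
    rw [hxdef]; field_simp; ring
  -- key step
  have key : ∀ t : ℝ, 0 < t → Y.G (Real.exp x * t) ≤ Real.exp (q*x) * Y.G t := by
    intro t ht
    obtain ⟨t', ht'def⟩ : ∃ t' : ℝ, t' = Real.exp x * t := ⟨_, rfl⟩
    have hΛ : 1 < Real.exp x := Real.one_lt_exp_iff.2 hx
    have htt' : t < t' := by rw [ht'def]; nlinarith
    have ht'0 : 0 < t' := lt_trans ht htt'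
    have h1 : Y.G t' - Y.G t = ∫ τ in t..t', Y.g τ := Y.G_diff ht.le htt'.le
    have h2 := Y.int_ub ht.le htt'.le
    have h3 := (hY t' ht'0).2
    have hexp : 1 - Real.exp (-x) ≤ x := by nlinarith [Real.add_one_le_exp (-x)]
    have hexp2 : Real.exp (-x) ≤ 1 := Real.exp_le_one_iff.2 (by linarith)
    have ht'' : t = Real.exp (-x) * t' := by
      rw [ht'def, Real.exp_neg]; field_simp
    have hG' : 0 ≤ Y.G t' := (Y.G_pos ht'0).le
    have hGt : 0 ≤ Y.G t := (Y.G_pos ht).le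
    have hg' : 0 ≤ Y.g t' := Y.g_nonneg ht'0.le
    have e1 : Y.g t' * (t' - t) = (t' * Y.g t') * (1 - Real.exp (-x)) := by
      rw [ht'']; ring
    have e2 : (t' * Y.g t') * (1 - Real.exp (-x)) ≤ (pp * Y.G t') * x := by
      have hpos : 0 ≤ 1 - Real.exp (-x) := by linarith
      have htg : 0 ≤ pp * Y.G t' := by positivity
      exact mul_le_mul h3 hexp hpos htg
    have step : Y.G t' ≤ Y.G t + pp * x * Y.G t' := by nlinarith
    have step2 : (pp / q) * Y.G t' ≤ Y.G t := by rw [← hppx]; nlinarith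
    have hqp : q * x = (q - pp) / pp := by rw [hxdef]; field_simp
    have hexpq : q / pp ≤ Real.exp (q * x) := by
      have h2 : q * x + 1 = q / pp := by rw [hqp]; field_simp; ring
      rw [← h2]
      exact Real.add_one_le_exp (q * x)
    have hfin : Y.G t' ≤ (q / pp) * Y.G t := by
      have hid : q / pp * (pp / q) = 1 := by field_simp
      calc Y.G t' = q / pp * (pp / q * Y.G t') := by rw [← mul_assoc, hid, one_mul]
        _ ≤ q / pp * Y.G t := mul_le_mul_of_nonneg_left step2 (by positivity)
    rw [← ht'def]
    calc Y.G t' ≤ (q/pp) * Y.G t := hfin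
      _ ≤ Real.exp (q*x) * Y.G t := mul_le_mul_of_nonneg_right hexpq hGt
  -- iterate
  have iter : ∀ k : ℕ, ∀ t : ℝ, 0 < t →
      Y.G (Real.exp (k*x) * t) ≤ Real.exp (q*(k*x)) * Y.G t := by
    intro k
    induction k with
    | zero => intro t ht; simp
    | succ k ih =>
      intro t ht
      have h1 : Real.exp (((k:ℕ)+1 : ℕ)*x) * t = Real.exp x * (Real.exp (k*x) * t) := by
        push_cast
        rw [← mul_assoc, ← Real.exp_add]
        ring_nf
      rw [h1]
      have hpos : (0:ℝ) < Real.exp ((k:ℝ)*x) * t := by positivity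
      have h2 := key _ hpos
      have h3 := ih t ht
      have h4 : Real.exp (q*x) * (Real.exp (q*((k:ℝ)*x)) * Y.G t)
          = Real.exp (q*(((k:ℕ)+1 : ℕ)*x)) * Y.G t := by
        push_cast
        rw [← mul_assoc, ← Real.exp_add]
        ring_nf
      calc Y.G (Real.exp x * (Real.exp ((k:ℝ)*x) * t))
          ≤ Real.exp (q*x) * Y.G (Real.exp ((k:ℝ)*x) * t) := h2
        _ ≤ Real.exp (q*x) * (Real.exp (q*((k:ℝ)*x)) * Y.G t) :=
            mul_le_mul_of_nonneg_left h3 (Real.exp_pos _).le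
        _ = _ := h4
  -- upper bound for t ≥ 1
  have hub : ∀ t : ℝ, 1 ≤ t → Y.G t ≤ (Real.exp (q*x) * Y.G 1) * t ^ q := by
    intro t ht
    have ht0 : (0:ℝ) < t := by linarith
    have hlog : 0 ≤ Real.log t := Real.log_nonneg ht
    obtain ⟨k, hk⟩ : ∃ k : ℕ, k = ⌈Real.log t / x⌉₊ := ⟨_, rfl⟩
    have hk1 : Real.log t ≤ k * x := by
      have h := Nat.le_ceil (Real.log t / x)
      rw [← hk] at h
      calc Real.log t = (Real.log t / x) * x := by field_simp
        _ ≤ k * x := mul_le_mul_of_nonneg_right h hx.le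
    have hk2 : (k:ℝ) * x ≤ Real.log t + x := by
      have h := (Nat.ceil_lt_add_one (by positivity : (0:ℝ) ≤ Real.log t / x)).le
      rw [← hk] at h
      calc (k:ℝ)*x ≤ (Real.log t / x + 1) * x := mul_le_mul_of_nonneg_right h hx.le
        _ = Real.log t + x := by field_simp
    have ht_le : t ≤ Real.exp (k*x) := by
      rw [← Real.exp_log ht0]
      exact Real.exp_le_exp.2 hk1
    have h1 : Y.G t ≤ Y.G (Real.exp ((k:ℝ)*x) * 1) := by
      rw [mul_one]
      exact Y.G_mono ht0.le (Set.mem_Ici.2 (by positivity)) ht_le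
    have h2 := iter k 1 one_pos
    have h3 : Real.exp (q*((k:ℝ)*x)) ≤ Real.exp (q*x) * t ^ q := by
      have hmm : q * ((k:ℝ)*x) ≤ q * (Real.log t + x) := mul_le_mul_of_nonneg_left hk2 hq0.le
      calc Real.exp (q*((k:ℝ)*x)) ≤ Real.exp (q*(Real.log t + x)) := Real.exp_le_exp.2 hmm
        _ = Real.exp (q*x) * t ^ q := by
            rw [Real.rpow_def_of_pos ht0, ← Real.exp_add]
            ring_nf
    have hG1 : 0 ≤ Y.G 1 := (Y.G_pos one_pos).le
    calc Y.G t ≤ Real.exp (q*((k:ℝ)*x)) * Y.G 1 := le_trans h1 h2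
      _ ≤ (Real.exp (q*x) * t^q) * Y.G 1 := mul_le_mul_of_nonneg_right h3 hG1
      _ = (Real.exp (q*x) * Y.G 1) * t^q := by ring
  -- lower bound for 0 < t ≤ 1
  have hlb : ∀ t : ℝ, 0 < t → t ≤ 1 → (Y.G 1 / Real.exp (q*x)) * t ^ q ≤ Y.G t := by
    intro t ht0 ht1
    have hlog : 0 ≤ -Real.log t := by
      have := Real.log_nonpos ht0.le ht1
      linarith
    obtain ⟨k, hk⟩ : ∃ k : ℕ, k = ⌈(-Real.log t) / x⌉₊ := ⟨_, rfl⟩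
    have hk1 : -Real.log t ≤ k * x := by
      have h := Nat.le_ceil ((-Real.log t) / x)
      rw [← hk] at h
      calc -Real.log t = ((-Real.log t) / x) * x := by field_simp
        _ ≤ k * x := mul_le_mul_of_nonneg_right h hx.le
    have hk2 : (k:ℝ) * x ≤ -Real.log t + x := by
      have h := (Nat.ceil_lt_add_one (by positivity : (0:ℝ) ≤ (-Real.log t) / x)).le
      rw [← hk] at h
      calc (k:ℝ)*x ≤ ((-Real.log t) / x + 1) * x := mul_le_mul_of_nonneg_right h hx.le
        _ = -Real.log t + x := by field_simp
    have h1 : (1:ℝ) ≤ Real.exp ((k:ℝ)*x) * t := by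
      have h := Real.exp_le_exp.2 hk1
      rw [Real.exp_neg, Real.exp_log ht0] at h
      calc (1:ℝ) = t⁻¹ * t := by field_simp
        _ ≤ Real.exp ((k:ℝ)*x) * t := mul_le_mul_of_nonneg_right h ht0.le
    have h2 : Y.G 1 ≤ Y.G (Real.exp ((k:ℝ)*x) * t) :=
      Y.G_mono (by norm_num) (Set.mem_Ici.2 (by positivity)) h1
    have h3 := iter k t ht0
    have h4 : Real.exp (q*((k:ℝ)*x)) ≤ Real.exp (q*x) * t ^ (-q) := by
      have hmm : q*((k:ℝ)*x) ≤ q*(-Real.log t + x) := mul_le_mul_of_nonneg_left hk2 hq0.le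
      calc Real.exp (q*((k:ℝ)*x)) ≤ Real.exp (q*(-Real.log t + x)) := Real.exp_le_exp.2 hmm
        _ = Real.exp (q*x) * t ^ (-q) := by
            rw [Real.rpow_def_of_pos ht0, ← Real.exp_add]
            ring_nf
    have hGt : 0 ≤ Y.G t := (Y.G_pos ht0).le
    have h5 : Y.G 1 ≤ (Real.exp (q*x) * t ^ (-q)) * Y.G t :=
      le_trans (le_trans h2 h3) (mul_le_mul_of_nonneg_right h4 hGt)
    have htq : t ^ (-q) * t ^ q = 1 := by
      rw [← Real.rpow_add ht0]
      simp
    have hE : (0:ℝ) < Real.exp (q*x) := Real.exp_pos _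
    have htqpos : (0:ℝ) < t ^ q := Real.rpow_pos_of_pos ht0 q
    rw [div_mul_eq_mul_div, div_le_iff₀ hE]
    have h6 := mul_le_mul_of_nonneg_right h5 htqpos.le
    have h7 : Real.exp (q*x) * t ^ (-q) * Y.G t * t ^ q = Real.exp (q*x) * Y.G t := by
      calc Real.exp (q*x) * t ^ (-q) * Y.G t * t ^ q
          = Real.exp (q*x) * Y.G t * (t ^ (-q) * t ^ q) := by ring
        _ = Real.exp (q*x) * Y.G t := by rw [htq, mul_one]
    calc Y.G 1 * t ^ q ≤ Real.exp (q*x) * t ^ (-q) * Y.G t * t ^ q := h6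
      _ = Real.exp (q*x) * Y.G t := h7
      _ = Y.G t * Real.exp (q*x) := by ring
  -- Ginv facts
  have GinvMono : ∀ a b : ℝ, 0 ≤ a → a ≤ b → Ginv a ≤ Ginv b := by
    intro a b ha hab
    by_contra h
    push_neg at h
    have h1 := hGinv a ha
    have h2 := hGinv b (ha.trans hab)
    have := Y.G_strictMono (Set.mem_Ici.2 h2.1) (Set.mem_Ici.2 h1.1) h
    rw [h1.2, h2.2] at this
    linarith
  have GinvPos : ∀ τ : ℝ, 0 < τ → 0 < Ginv τ := by
    intro τ hτ
    have h1 := hGinv τ hτ.le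
    rcases h1.1.lt_or_eq with h | h
    · exact h
    · exfalso
      have : Y.G (Ginv τ) = 0 := by rw [← h, Y.G_zero]
      rw [h1.2] at this
      linarith
  -- lower bound for G on (0, T]
  obtain ⟨T, hTdef⟩ : ∃ T : ℝ, T = max (Ginv 1) 1 := ⟨_, rfl⟩
  have hT1 : (1:ℝ) ≤ T := hTdef ▸ le_max_right _ _
  have hT0 : (0:ℝ) < T := by linarith
  obtain ⟨c, hcdef⟩ : ∃ c : ℝ, c = min (Y.G 1 / Real.exp (q*x)) (Y.G 1 / T ^ q) := ⟨_, rfl⟩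
  have hc0 : 0 < c := by
    rw [hcdef]
    exact lt_min (div_pos (Y.G_pos one_pos) (Real.exp_pos _))
      (div_pos (Y.G_pos one_pos) (Real.rpow_pos_of_pos hT0 q))
  have hGlow : ∀ t : ℝ, 0 < t → t ≤ T → c * t ^ q ≤ Y.G t := by
    intro t ht0 htT
    have htq : (0:ℝ) < t ^ q := Real.rpow_pos_of_pos ht0 q
    rcases le_or_gt t 1 with h | h
    · have := hlb t ht0 h
      have hcle : c ≤ Y.G 1 / Real.exp (q*x) := hcdef ▸ min_le_left _ _
      calc c * t ^ q ≤ (Y.G 1 / Real.exp (q*x)) * t ^ q :=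
            mul_le_mul_of_nonneg_right hcle htq.le
        _ ≤ Y.G t := this
    · have h1 : Y.G 1 ≤ Y.G t := Y.G_mono (by norm_num) (Set.mem_Ici.2 ht0.le) h.le
      have h2 : t ^ q ≤ T ^ q := Real.rpow_le_rpow ht0.le htT hq0.le
      have hcle : c ≤ Y.G 1 / T ^ q := hcdef ▸ min_le_right _ _
      have hTq : (0:ℝ) < T ^ q := Real.rpow_pos_of_pos hT0 q
      have hGnn : (0:ℝ) ≤ Y.G 1 / T ^ q := le_of_lt (div_pos (Y.G_pos one_pos) hTq)
      calc c * t ^ q ≤ (Y.G 1 / T ^ q) * T ^ q :=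
            mul_le_mul hcle h2 htq.le hGnn
        _ = Y.G 1 := by field_simp
        _ ≤ Y.G t := h1
  -- Ginv upper bound on (0,1)
  have hGinvUB : ∀ τ : ℝ, 0 < τ → τ < 1 → Ginv τ ≤ (τ / c) ^ (1/q) := by
    intro τ hτ0 hτ1
    have ht := hGinv τ hτ0.le
    have ht0 : 0 < Ginv τ := GinvPos τ hτ0
    have htT : Ginv τ ≤ T := by
      rw [hTdef]
      exact le_trans (GinvMono τ 1 hτ0.le hτ1.le) (le_max_left _ _)
    have h1 : c * Ginv τ ^ q ≤ τ := by
      have := hGlow _ ht0 htT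
      rwa [ht.2] at this
    have h2 : Ginv τ ^ q ≤ τ / c := by
      rw [le_div_iff₀ hc0]
      linarith
    have h3 : (Ginv τ ^ q) ^ (1/q) = Ginv τ := by
      rw [← Real.rpow_mul ht0.le, mul_one_div, div_self hq0.ne', Real.rpow_one]
    calc Ginv τ = (Ginv τ ^ q) ^ (1/q) := h3.symm
      _ ≤ (τ / c) ^ (1/q) := Real.rpow_le_rpow (Real.rpow_pos_of_pos ht0 q).le h2 (by positivity)
  -- the exponent r
  obtain ⟨r, hrdef⟩ : ∃ r : ℝ, r = 1/q - 1 - s/n := ⟨_, rfl⟩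
  have hr1 : -1 < r := by
    have h1 : s / n < 1 / q := by
      rw [div_lt_div_iff₀ hn' hq0]
      nlinarith
    rw [hrdef]
    linarith
  have hradd : ∀ τ : ℝ, 0 < τ → τ ^ (1/q) * τ ^ (-1 - s/(n:ℝ)) = τ ^ r := by
    intro τ hτ
    rw [← Real.rpow_add hτ, hrdef]
    ring_nf
  -- PART 1 : convergence
  have part1 : (∫⁻ τ in Set.Ioo (0 : ℝ) 1,
      ENNReal.ofReal (Ginv τ * τ ^ (-1 - s / n)) < ⊤) := by
    obtain ⟨K, hKdef⟩ : ∃ K : ℝ, K = (1/c) ^ (1/q) := ⟨_, rfl⟩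
    have hK0 : 0 < K := by rw [hKdef]; positivity
    have pointwise : ∀ τ ∈ Set.Ioo (0:ℝ) 1,
        Ginv τ * τ ^ (-1 - s/(n:ℝ)) ≤ K * τ ^ r := by
      intro τ hτ
      have hτ0 := hτ.1
      have h1 := hGinvUB τ hτ0 hτ.2
      have h2 : (τ / c) ^ (1/q) = K * τ ^ (1/q) := by
        rw [div_eq_mul_inv, mul_comm τ c⁻¹, Real.mul_rpow (by positivity) hτ0.le, hKdef,
          one_div c]
      have h4 : (0:ℝ) < τ ^ (-1 - s/(n:ℝ)) := Real.rpow_pos_of_pos hτ0 _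
      calc Ginv τ * τ ^ (-1 - s/(n:ℝ)) ≤ (τ/c) ^ (1/q) * τ ^ (-1 - s/(n:ℝ)) :=
            mul_le_mul_of_nonneg_right h1 h4.le
        _ = K * (τ ^ (1/q) * τ ^ (-1 - s/(n:ℝ))) := by rw [h2, mul_assoc]
        _ = K * τ ^ r := by rw [hradd τ hτ0]
    have hint : IntegrableOn (fun τ : ℝ => K * τ ^ r) (Set.Ioo (0:ℝ) 1) volume := by
      exact ((intervalIntegral.integrableOn_Ioo_rpow_iff one_pos).2 hr1).const_mul K
    have hle : (∫⁻ τ in Set.Ioo (0:ℝ) 1, ENNReal.ofReal (Ginv τ * τ ^ (-1 - s/(n:ℝ))))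
        ≤ ∫⁻ τ in Set.Ioo (0:ℝ) 1, ENNReal.ofReal (K * τ ^ r) := by
      refine lintegral_mono_ae ?_
      filter_upwards [ae_restrict_mem measurableSet_Ioo] with τ hτ
      exact ENNReal.ofReal_le_ofReal (pointwise τ hτ)
    exact lt_of_le_of_lt hle hint.lintegral_lt_top
  -- PART 2 : divergence
  have part2 : (∫⁻ τ in Set.Ioi (1 : ℝ),
      ENNReal.ofReal (Ginv τ * τ ^ (-1 - s / n)) = ⊤) := by
    obtain ⟨τ0, hτ0def⟩ : ∃ τ0 : ℝ, τ0 = max 1 (Y.G 1) := ⟨_, rfl⟩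
    have hτ01 : (1:ℝ) ≤ τ0 := hτ0def ▸ le_max_left _ _
    have hτ0pos : (0:ℝ) < τ0 := by linarith
    obtain ⟨C, hCdef⟩ : ∃ C : ℝ, C = Real.exp (q*x) * Y.G 1 := ⟨_, rfl⟩
    have hC0 : 0 < C := by rw [hCdef]; exact mul_pos (Real.exp_pos _) (Y.G_pos one_pos)
    obtain ⟨K, hKdef⟩ : ∃ K : ℝ, K = (1/C) ^ (1/q) := ⟨_, rfl⟩
    have hK0 : 0 < K := by rw [hKdef]; positivity
    have hGinvLB : ∀ τ : ℝ, τ0 ≤ τ → (τ / C) ^ (1/q) ≤ Ginv τ := by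
      intro τ hτ
      have hτpos : 0 < τ := lt_of_lt_of_le hτ0pos hτ
      have ht := hGinv τ hτpos.le
      have hG1τ : Y.G 1 ≤ τ := le_trans (hτ0def ▸ le_max_right 1 (Y.G 1)) hτ
      have ht1 : 1 ≤ Ginv τ := by
        have h := GinvMono (Y.G 1) τ (Y.G_pos one_pos).le hG1τ
        rwa [hGinv' 1 (by norm_num)] at h
      have ht0 : 0 < Ginv τ := by linarith
      have h1 : τ ≤ C * Ginv τ ^ q := by
        have := hub (Ginv τ) ht1
        rw [ht.2] at this
        rw [hCdef]
        exact this
      have h2 : τ / C ≤ Ginv τ ^ q := by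
        rw [div_le_iff₀ hC0]
        linarith
      have h3 : (Ginv τ ^ q) ^ (1/q) = Ginv τ := by
        rw [← Real.rpow_mul ht0.le, mul_one_div, div_self hq0.ne', Real.rpow_one]
      calc (τ/C) ^ (1/q) ≤ (Ginv τ ^ q) ^ (1/q) :=
            Real.rpow_le_rpow (by positivity) h2 (by positivity)
        _ = Ginv τ := h3
    have divK : (∫⁻ τ in Set.Ioi τ0, ENNReal.ofReal (K * τ ^ r)) = ⊤ := by
      by_contra h
      have hm : Measurable fun τ : ℝ => K * τ ^ r :=
        (measurable_id.pow_const r).const_mul K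
      have hnn : 0 ≤ᶠ[ae (volume.restrict (Set.Ioi τ0))] fun τ : ℝ => K * τ ^ r := by
        filter_upwards [ae_restrict_mem measurableSet_Ioi] with τ hτ
        have : (0:ℝ) < τ := lt_trans hτ0pos hτ
        positivity
      have hInt : IntegrableOn (fun τ : ℝ => K * τ ^ r) (Set.Ioi τ0) volume := by
        refine ⟨hm.aestronglyMeasurable, ?_⟩
        rw [hasFiniteIntegral_iff_ofReal hnn]
        exact lt_top_iff_ne_top.2 h
      have hInt2 : IntegrableOn (fun τ : ℝ => τ ^ r) (Set.Ioi τ0) volume := by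
        have h2 := hInt.const_mul K⁻¹
        have : (fun τ : ℝ => K⁻¹ * (K * τ ^ r)) = fun τ : ℝ => τ ^ r := by
          funext τ
          rw [← mul_assoc, inv_mul_cancel₀ hK0.ne', one_mul]
        rwa [this] at h2
      rw [integrableOn_Ioi_rpow_iff hτ0pos] at hInt2
      linarith
    rw [eq_top_iff]
    calc (⊤ : ENNReal) = ∫⁻ τ in Set.Ioi τ0, ENNReal.ofReal (K * τ ^ r) := divK.symm
      _ ≤ ∫⁻ τ in Set.Ioi τ0, ENNReal.ofReal (Ginv τ * τ ^ (-1 - s/(n:ℝ))) := by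
          refine lintegral_mono_ae ?_
          filter_upwards [ae_restrict_mem measurableSet_Ioi] with τ hτ
          have hττ0 : τ0 ≤ τ := le_of_lt hτ
          have hτpos : (0:ℝ) < τ := lt_trans hτ0pos hτ
          apply ENNReal.ofReal_le_ofReal
          have h2 : (τ / C) ^ (1/q) = K * τ ^ (1/q) := by
            rw [div_eq_mul_inv, mul_comm τ C⁻¹, Real.mul_rpow (by positivity) hτpos.le,
              hKdef, one_div C]
          have h4 : (0:ℝ) < τ ^ (-1 - s/(n:ℝ)) := Real.rpow_pos_of_pos hτpos _
          calc K * τ ^ r = K * (τ ^ (1/q) * τ ^ (-1 - s/(n:ℝ))) := by rw [hradd τ hτpos]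
            _ = (τ/C) ^ (1/q) * τ ^ (-1 - s/(n:ℝ)) := by rw [h2, mul_assoc]
            _ ≤ Ginv τ * τ ^ (-1 - s/(n:ℝ)) :=
                mul_le_mul_of_nonneg_right (hGinvLB τ hττ0) h4.le
      _ ≤ ∫⁻ τ in Set.Ioi (1:ℝ), ENNReal.ofReal (Ginv τ * τ ^ (-1 - s/(n:ℝ))) :=
          lintegral_mono_set (fun τ hτ => lt_of_lt_of_le (lt_of_le_of_lt hτ01 hτ) le_rfl)
  exact ⟨part1, part2⟩


end
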